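/- Let K₀ < 0 and F₀ > 0. Suppose λ : [0,∞) → ℝ is differentiable, positive, satisfies λ(0) = 1 and λ'(t) = -(2/3)·K₀ + (2/3)·F₀·λ(t)⁻³ for all t ≥ 0. Then λ(t)⁴ ≥ 1 + (8/3)·F₀·t for all t ≥ 0; consequently λ(t) → ∞ and λ(t)⁻¹ → 0 as t → ∞. -/

import Mathlib

/-- For `K₀ < 0` and `F₀ > 0`, any positive solution of the reduced
normalized ODE on `[0,∞)` with `λ(0) = 1` satisfies `λ(t)⁴ ≥ 1 + (8/3)F₀ t`; consequently
`λ(t) → ∞` and `λ(t)⁻¹ → 0` as `t → ∞`. -/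
theorem stmt_7 (K₀ F₀ : ℝ) (hK₀ : K₀ < 0) (hF₀ : 0 < F₀)
    (lam : ℝ → ℝ) (hpos : ∀ t ∈ Set.Ici (0:ℝ), 0 < lam t) (hl0 : lam 0 = 1)
    (hode : ∀ t ∈ Set.Ici (0:ℝ),
      HasDerivWithinAt lam (-(2/3) * K₀ + (2/3) * F₀ * ((lam t)^3)⁻¹) (Set.Ici 0) t) :
    (∀ t ∈ Set.Ici (0:ℝ), 1 + (8/3) * F₀ * t ≤ (lam t)^4) ∧
    Filter.Tendsto lam Filter.atTop Filter.atTop ∧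
    Filter.Tendsto (fun t => (lam t)⁻¹) Filter.atTop (nhds 0) := by
  set h : ℝ → ℝ := fun t => (lam t)^4 - (8/3) * F₀ * t with hh
  have hders : ∀ t ∈ Set.Ici (0:ℝ),
      HasDerivWithinAt h
        ((4:ℕ) * (lam t)^3 * (-(2/3) * K₀ + (2/3) * F₀ * ((lam t)^3)⁻¹) - (8/3) * F₀)
        (Set.Ici 0) t := by
    intro t ht
    exact ((hode t ht).pow 4).sub
      (((hasDerivWithinAt_id t _).const_mul ((8:ℝ)/3 * F₀)).congr_deriv (by ring))
  have hdval : ∀ t ∈ Set.Ici (0:ℝ),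
      ((4:ℕ) * (lam t)^3 * (-(2/3) * K₀ + (2/3) * F₀ * ((lam t)^3)⁻¹) - (8/3) * F₀)
        = -(8/3) * K₀ * (lam t)^3 := by
    intro t ht
    have hl : (lam t)^3 ≠ 0 := pow_ne_zero 3 (hpos t ht).ne'
    have hl' : lam t ≠ 0 := (hpos t ht).ne'
    push_cast
    field_simp
    ring
  have hdnn : ∀ t ∈ interior (Set.Ici (0:ℝ)), 0 ≤ deriv h t := by
    intro t ht
    rw [interior_Ici] at ht
    have ht' : (0:ℝ) ≤ t := le_of_lt ht
    have hda : HasDerivAt h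
        ((4:ℕ) * (lam t)^3 * (-(2/3) * K₀ + (2/3) * F₀ * ((lam t)^3)⁻¹) - (8/3) * F₀) t :=
      (hders t ht').hasDerivAt (Ici_mem_nhds ht)
    rw [hda.deriv, hdval t ht']
    have := hpos t ht'
    nlinarith [pow_pos this 3]
  have hcont : ContinuousOn h (Set.Ici 0) := fun t ht =>
    (hders t ht).continuousWithinAt
  have hmono : MonotoneOn h (Set.Ici 0) :=
    monotoneOn_of_deriv_nonneg (convex_Ici 0) hcont
      (fun x hx => by
        rw [interior_Ici] at hx
        exact ((hders x (Set.mem_Ici.mpr (le_of_lt (Set.mem_Ioi.mp hx)))).hasDerivAt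
          (Ici_mem_nhds hx)).differentiableAt.differentiableWithinAt)
      (by rw [interior_Ici, ← interior_Ici (a := (0:ℝ))]; exact hdnn)
  have hineq : ∀ t ∈ Set.Ici (0:ℝ), 1 + (8/3) * F₀ * t ≤ (lam t)^4 := by
    intro t ht
    have := hmono (Set.self_mem_Ici) ht ht
    simp only [hh, hl0] at this
    nlinarith
  refine ⟨hineq, ?_, ?_⟩
  · -- lam → ∞
    have hlam : Filter.Tendsto lam Filter.atTop Filter.atTop := by
      rw [Filter.tendsto_atTop]
      intro M
      set M' : ℝ := max M 1 with hM'
      have hM'1 : (1:ℝ) ≤ M' := le_max_right _ _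
      have hM'0 : (0:ℝ) < M' := lt_of_lt_of_le one_pos hM'1
      have hev : ∀ᶠ t in Filter.atTop, (M'^4 - 1) / ((8/3) * F₀) ≤ t ∧ (0:ℝ) ≤ t := by
        filter_upwards [Filter.eventually_ge_atTop ((M'^4 - 1) / ((8/3) * F₀)),
          Filter.eventually_ge_atTop (0:ℝ)] with t h1 h2 using ⟨h1, h2⟩
      filter_upwards [hev] with t ⟨h1, h2⟩
      have hle : M'^4 ≤ (lam t)^4 := by
        have := hineq t h2
        have h3 : M'^4 ≤ 1 + (8/3) * F₀ * t := by
          have := (div_le_iff₀ (by positivity : (0:ℝ) < (8/3) * F₀)).mp h1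
          nlinarith
        linarith
      have : M' ≤ lam t :=
        le_of_pow_le_pow_left₀ (by norm_num) (le_of_lt (hpos t h2)) hle
      exact le_trans (le_max_left M 1) this
    exact hlam
  · -- inverse → 0
    have hlam : Filter.Tendsto lam Filter.atTop Filter.atTop := by
      rw [Filter.tendsto_atTop]
      intro M
      set M' : ℝ := max M 1 with hM'
      have hM'1 : (1:ℝ) ≤ M' := le_max_right _ _
      have hM'0 : (0:ℝ) < M' := lt_of_lt_of_le one_pos hM'1
      have hev : ∀ᶠ t in Filter.atTop, (M'^4 - 1) / ((8/3) * F₀) ≤ t ∧ (0:ℝ) ≤ t := by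
        filter_upwards [Filter.eventually_ge_atTop ((M'^4 - 1) / ((8/3) * F₀)),
          Filter.eventually_ge_atTop (0:ℝ)] with t h1 h2 using ⟨h1, h2⟩
      filter_upwards [hev] with t ⟨h1, h2⟩
      have hle : M'^4 ≤ (lam t)^4 := by
        have := hineq t h2
        have h3 : M'^4 ≤ 1 + (8/3) * F₀ * t := by
          have := (div_le_iff₀ (by positivity : (0:ℝ) < (8/3) * F₀)).mp h1
          nlinarith
        linarith
      have : M' ≤ lam t :=
        le_of_pow_le_pow_left₀ (by norm_num) (le_of_lt (hpos t h2)) hle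
      exact le_trans (le_max_left M 1) this
    exact hlam.inv_tendsto_atTop
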